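/- arXiv:1303.6235 — 3 statements merged into one kernel-verified Lean document; each statement's English description precedes it below -/
import Mathlib

section
/- Suppose X_n, X are Banach spaces with uniformly bounded operators P_n : X → X_n and J_n : X_n → X satisfying P_n J_n = I_n and J_n P_n f → f for all f ∈ X. Suppose A_n, A generate strongly continuous semigroups T_n, T with a uniform bound ‖T_n(t)‖ ≤ M e^{ωt}, and suppose Y ⊂ D(A) is a T-invariant Banach space with ‖T(t)‖_Y ≤ M e^{ωt} and P_n Y ⊂ D(A_n). If there exist C > 0 and p ∈ ℕ such that ‖A_n P_n f − P_n A f‖ ≤ C ‖f‖_Y / n^p for all f ∈ Y, then for each t > 0 there is C' > 0 with ‖T_n(t) P_n f − P_n T(t) f‖ ≤ C' ‖f‖_Y / n^p for all f ∈ Y, uniformly in t on compact intervals. -/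
open scoped Topology

/-- Quantitative Trotter–Kato approximation theorem.  `X` and the `X n` are Banach spaces,
`P n : X → X n` and `J n : X n → X` are uniformly bounded with `P n ∘ J n = id` and
`J n (P n f) → f`; `T` and `T' n` are strongly continuous semigroups with generators
`(A, DA)` and `(A' n, DA' n)` satisfying the stability bound `‖T' n t‖ ≤ M e^{ω t}`;
`Y ⊆ DA` is a `T`-invariant subspace with norm `nY` on which `T` satisfies the same
bound, `P n Y ⊆ DA' n`, and the consistency estimate
`‖A' n (P n f) - P n (A f)‖ ≤ C nY f / n^p` holds on `Y`.  Then for every compact time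
interval `[0, t₀]` there is `C' > 0` with
`‖T' n t (P n f) - P n (T t f)‖ ≤ C' nY f / n^p` for all `f ∈ Y`, `t ∈ [0, t₀]`, `n ≥ 1`. -/
theorem trotter_kato_quantitative
    {X : Type*} [NormedAddCommGroup X] [NormedSpace ℝ X] [CompleteSpace X]
    {Xn : ℕ → Type*} [∀ n, NormedAddCommGroup (Xn n)] [∀ n, NormedSpace ℝ (Xn n)]
    [∀ n, CompleteSpace (Xn n)]
    (P : ∀ n, X →L[ℝ] Xn n) (J : ∀ n, Xn n →L[ℝ] X) (K : ℝ)
    (hK : 0 < K) (hPK : ∀ n, ‖P n‖ ≤ K) (hJK : ∀ n, ‖J n‖ ≤ K)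
    (hPJ : ∀ n (x : Xn n), P n (J n x) = x)
    (hJP : ∀ f : X, Filter.Tendsto (fun n => J n (P n f)) Filter.atTop (𝓝 f))
    (T : ℝ → X →L[ℝ] X) (T' : ∀ n, ℝ → Xn n →L[ℝ] Xn n)
    (hT0 : T 0 = ContinuousLinearMap.id ℝ X)
    (hTsg : ∀ s t : ℝ, 0 ≤ s → 0 ≤ t → T (s + t) = (T s).comp (T t))
    (hTcont : ∀ f : X, ContinuousOn (fun t => T t f) (Set.Ici 0))
    (hT'0 : ∀ n, T' n 0 = ContinuousLinearMap.id ℝ (Xn n))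
    (hT'sg : ∀ n, ∀ s t : ℝ, 0 ≤ s → 0 ≤ t → T' n (s + t) = (T' n s).comp (T' n t))
    (hT'cont : ∀ n, ∀ x : Xn n, ContinuousOn (fun t => T' n t x) (Set.Ici 0))
    (M ω : ℝ) (hM : 1 ≤ M)
    (hstab : ∀ n, ∀ t : ℝ, 0 ≤ t → ‖T' n t‖ ≤ M * Real.exp (ω * t))
    (DA : Set X) (A : X → X) (DA' : ∀ n, Set (Xn n)) (A' : ∀ n, Xn n → Xn n)
    (hgen : ∀ f ∈ DA, ∀ t : ℝ, 0 ≤ t → HasDerivAt (fun s => T s f) (T t (A f)) t)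
    (hgen' : ∀ n, ∀ x ∈ DA' n, ∀ t : ℝ, 0 ≤ t →
      HasDerivAt (fun s => T' n s x) (T' n t (A' n x)) t)
    (Y : Set X) (nY : X → ℝ) (hYnonneg : ∀ f ∈ Y, 0 ≤ nY f)
    (hYDA : Y ⊆ DA)
    (hYinv : ∀ t : ℝ, 0 ≤ t → ∀ f ∈ Y, T t f ∈ Y)
    (hYstab : ∀ t : ℝ, 0 ≤ t → ∀ f ∈ Y, nY (T t f) ≤ M * Real.exp (ω * t) * nY f)
    (hPY : ∀ n, ∀ f ∈ Y, P n f ∈ DA' n)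
    (C : ℝ) (hC : 0 < C) (p : ℕ)
    (hcons : ∀ n : ℕ, 1 ≤ n → ∀ f ∈ Y,
      ‖A' n (P n f) - P n (A f)‖ ≤ C * nY f / (n : ℝ) ^ p) :
    ∀ t₀ : ℝ, 0 < t₀ → ∃ C' : ℝ, 0 < C' ∧
      ∀ n : ℕ, 1 ≤ n → ∀ f ∈ Y, ∀ t ∈ Set.Icc (0 : ℝ) t₀,
        ‖T' n t (P n f) - P n (T t f)‖ ≤ C' * nY f / (n : ℝ) ^ p := by
  intro t₀ ht₀
  have hM0 : (0:ℝ) < M := lt_of_lt_of_le one_pos hM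
  set B : ℝ := M * Real.exp (|ω| * t₀) with hBdef
  have hBpos : 0 < B := by positivity
  refine ⟨C * B * B * t₀, by positivity, ?_⟩
  intro n hn f hf t ht
  obtain ⟨ht0, htt0⟩ := ht
  have hn0 : (0:ℝ) < (n:ℝ) ^ p := by
    have : (1:ℝ) ≤ (n:ℝ) := by exact_mod_cast hn
    positivity
  -- uniform operator bound on [0, t₀]
  have hTB : ∀ τ : ℝ, 0 ≤ τ → τ ≤ t₀ → ‖T' n τ‖ ≤ B := by
    intro τ h0 h1
    refine (hstab n τ h0).trans ?_
    have hexp : Real.exp (ω * τ) ≤ Real.exp (|ω| * t₀) := by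
      apply Real.exp_le_exp.mpr
      calc ω * τ ≤ |ω| * τ := mul_le_mul_of_nonneg_right (le_abs_self ω) h0
        _ ≤ |ω| * t₀ := mul_le_mul_of_nonneg_left h1 (abs_nonneg ω)
    exact mul_le_mul_of_nonneg_left hexp hM0.le
  have hTBapp : ∀ τ : ℝ, 0 ≤ τ → τ ≤ t₀ → ∀ u : Xn n, ‖T' n τ u‖ ≤ B * ‖u‖ := fun τ h0 h1 u =>
    ((T' n τ).le_opNorm u).trans (mul_le_mul_of_nonneg_right (hTB τ h0 h1) (norm_nonneg u))
  -- commutation of A with the semigroup on Y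
  have hcomm : ∀ s : ℝ, 0 ≤ s → A (T s f) = T s (A f) := by
    intro s hs
    have hTsY : T s f ∈ Y := hYinv s hs f hf
    have h1 : HasDerivWithinAt (fun τ => T τ (T s f)) (A (T s f)) (Set.Ici 0) 0 := by
      have h := hgen (T s f) (hYDA hTsY) 0 le_rfl
      rw [hT0] at h
      exact h.hasDerivWithinAt
    have h2 : HasDerivWithinAt (fun τ => T τ (T s f)) (T s (A f)) (Set.Ici 0) 0 := by
      have h4 := hgen f (hYDA hf) s hs
      have h5 : HasDerivAt (fun τ : ℝ => τ + s) 1 0 := by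
        simpa using (hasDerivAt_id (0:ℝ)).add_const s
      have h4' : HasDerivAt (fun u : ℝ => T u f) (T s (A f)) ((fun τ : ℝ => τ + s) 0) := by
        simpa using h4
      have h6 : HasDerivAt (fun τ : ℝ => T (τ + s) f) (T s (A f)) 0 := by
        have := HasDerivAt.scomp (𝕜' := ℝ) (0:ℝ) h4' h5
        simpa [Function.comp_def] using this
      refine (h6.hasDerivWithinAt).congr ?_ ?_
      · intro y hy
        rw [hTsg y s hy hs]; rfl
      · show T 0 (T s f) = T (0 + s) f
        rw [zero_add, hT0]
        rfl
    exact (uniqueDiffOn_Ici (0:ℝ) 0 Set.self_mem_Ici).eq_deriv _ h1 h2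
  -- the interpolation function
  set g : ℝ → Xn n := fun s => T' n (t - s) (P n (T s f)) with hgdef
  set D' : ℝ → Xn n := fun s => T' n (t - s) (P n (T s (A f)) - A' n (P n (T s f))) with hD'def
  have hderiv : ∀ s ∈ Set.Icc (0:ℝ) t, HasDerivWithinAt g (D' s) (Set.Icc 0 t) s := by
    rintro s ⟨hs0, hst⟩
    have hTsY : T s f ∈ Y := hYinv s hs0 f hf
    have hts0 : 0 ≤ t - s := by linarith
    set x₀ : Xn n := P n (T s f) with hx₀
    set w : Xn n := P n (T s (A f)) with hw
    -- derivative of s' ↦ P n (T s' f)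
    have hv : HasDerivAt (fun s' => P n (T s' f)) w s :=
      (P n).hasFDerivAt.comp_hasDerivAt s (hgen f (hYDA hf) s hs0)
    -- fixed-vector part
    have hfix : HasDerivAt (fun s' => T' n (t - s') x₀) ((-1 : ℝ) • T' n (t - s) (A' n x₀)) s := by
      have hinner : HasDerivAt (fun s' : ℝ => t - s') (-1) s := by
        simpa using (hasDerivAt_id s).const_sub t
      have hg' : HasDerivAt (fun σ => T' n σ x₀) (T' n (t - s) (A' n x₀))
          ((fun s' : ℝ => t - s') s) := hgen' n x₀ (hPY n _ hTsY) (t - s) hts0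
      have := HasDerivAt.scomp (𝕜' := ℝ) s hg' hinner
      simpa [Function.comp_def] using this
    -- moving-vector part via slopes
    have hslope : HasDerivWithinAt (fun s' => T' n (t - s') (P n (T s' f) - x₀))
        (T' n (t - s) w) (Set.Icc 0 t) s := by
      rw [hasDerivWithinAt_iff_tendsto_slope]
      set l := 𝓝[Set.Icc (0:ℝ) t \ {s}] s with hl
      have hmem : ∀ᶠ s' in l, s' ∈ Set.Icc (0:ℝ) t \ {s} := eventually_mem_nhdsWithin
      have hvs : Filter.Tendsto (fun s' => slope (fun u => P n (T u f)) s s') l (𝓝 w) := by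
        have h := hasDerivAt_iff_tendsto_slope.mp hv
        exact h.mono_left (nhdsWithin_mono s (fun x hx => hx.2))
      have heq : ∀ s', slope (fun s' => T' n (t - s') (P n (T s' f) - x₀)) s s'
          = T' n (t - s') (slope (fun u => P n (T u f)) s s') := by
        intro s'
        simp [slope, sub_self, map_zero, map_smul, map_sub, x₀]
      have h1 : Filter.Tendsto
          (fun s' => T' n (t - s') (slope (fun u => P n (T u f)) s s' - w)) l (𝓝 0) := by
        apply squeeze_zero_norm' (a := fun s' => B * ‖slope (fun u => P n (T u f)) s s' - w‖)
        · filter_upwards [hmem] with s' hs'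
          exact hTBapp (t - s') (by linarith [hs'.1.2]) (by linarith [hs'.1.1]) _
        · have := Filter.Tendsto.norm (hvs.sub (tendsto_const_nhds (x := w)))
          simpa using (tendsto_const_nhds (x := B)).mul this
      have h2 : Filter.Tendsto (fun s' => T' n (t - s') w) l (𝓝 (T' n (t - s) w)) := by
        have hts : Filter.Tendsto (fun s' : ℝ => t - s') l (𝓝[Set.Ici (0:ℝ)] (t - s)) := by
          apply tendsto_nhdsWithin_of_tendsto_nhds_of_eventually_within
          · exact tendsto_const_nhds.sub (Filter.tendsto_id.mono_right nhdsWithin_le_nhds)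
          · filter_upwards [hmem] with s' hs'
            exact sub_nonneg.mpr hs'.1.2
        exact (hT'cont n w (t - s) hts0).tendsto.comp hts
      have h3 := h1.add h2
      rw [zero_add] at h3
      refine (Filter.Tendsto.congr (fun s' => ?_) h3).congr (fun s' => (heq s').symm)
      rw [← map_add, sub_add_cancel]
    have hsum := hslope.add hfix.hasDerivWithinAt
    have hfun : (fun s' => T' n (t - s') (P n (T s' f) - x₀) + T' n (t - s') x₀) = g := by
      funext s'
      rw [← map_add, sub_add_cancel]
    change HasDerivWithinAt (fun s' => T' n (t - s') (P n (T s' f) - x₀) + T' n (t - s') x₀) _ _ _ at hsum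
    rw [hfun] at hsum
    have : T' n (t - s) w + (-1 : ℝ) • T' n (t - s) (A' n x₀) = D' s := by
      simp [D', map_sub, sub_eq_add_neg, x₀, w]
    rwa [this] at hsum
  -- bound on the derivative
  set Dc : ℝ := C * B * B * nY f / (n:ℝ) ^ p with hDc
  have hDcnn : 0 ≤ Dc := by
    have := hYnonneg f hf
    positivity
  have hbound : ∀ s ∈ Set.Icc (0:ℝ) t, ‖D' s‖ ≤ Dc := by
    rintro s ⟨hs0, hst⟩
    have hTsY : T s f ∈ Y := hYinv s hs0 f hf
    have hΔ : ‖P n (T s (A f)) - A' n (P n (T s f))‖ ≤ C * (B * nY f) / (n:ℝ) ^ p := by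
      rw [norm_sub_rev, ← hcomm s hs0]
      refine (hcons n hn (T s f) hTsY).trans ?_
      have h1 : nY (T s f) ≤ B * nY f := by
        refine (hYstab s hs0 f hf).trans ?_
        have hexp : Real.exp (ω * s) ≤ Real.exp (|ω| * t₀) := by
          apply Real.exp_le_exp.mpr
          calc ω * s ≤ |ω| * s := mul_le_mul_of_nonneg_right (le_abs_self ω) hs0
            _ ≤ |ω| * t₀ := mul_le_mul_of_nonneg_left (by linarith) (abs_nonneg ω)
        have : M * Real.exp (ω * s) ≤ B := mul_le_mul_of_nonneg_left hexp hM0.le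
        exact mul_le_mul_of_nonneg_right this (hYnonneg f hf)
      gcongr
    calc ‖D' s‖ ≤ B * ‖P n (T s (A f)) - A' n (P n (T s f))‖ :=
          hTBapp (t - s) (by linarith) (by linarith) _
      _ ≤ B * (C * (B * nY f) / (n:ℝ) ^ p) := mul_le_mul_of_nonneg_left hΔ hBpos.le
      _ = Dc := by rw [hDc]; ring
  have hmvt := Convex.norm_image_sub_le_of_norm_hasDerivWithin_le hderiv hbound
      (convex_Icc 0 t) (Set.left_mem_Icc.mpr ht0) (Set.right_mem_Icc.mpr ht0)
  have hgt : g t = P n (T t f) := by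
    simp [g, hT'0 n]
  have hg0 : g 0 = T' n t (P n f) := by
    simp [g, hT0]
  calc ‖T' n t (P n f) - P n (T t f)‖ = ‖g t - g 0‖ := by rw [hgt, hg0, norm_sub_rev]
    _ ≤ Dc * ‖t - 0‖ := hmvt
    _ = Dc * t := by rw [sub_zero, Real.norm_of_nonneg ht0]
    _ ≤ Dc * t₀ := mul_le_mul_of_nonneg_left htt0 hDcnn
    _ = C * B * B * t₀ * nY f / (n:ℝ) ^ p := by rw [hDc]; ring
end

section
/- Under the assumptions of the quantitative Trotter–Kato theorem, suppose in addition A generates an analytic semigroup, and there exist ε ∈ (0,1) and Banach spaces Y ↪ D(A) ↪ Z ↪ X such that T(s)Z ⊂ Y for all s > 0 with ‖T(s)‖_{L(Z,Y)} ≤ M/s^{1−ε}, and ‖(P_n A − A_n P_n) g‖ ≤ C‖g‖_Y/n^p for g ∈ Y. Then ‖T_n(t) P_n f − P_n T(t) f‖ ≤ C' ‖f‖_Z / n^p for all f ∈ Z and n ∈ ℕ, where C' depends only on t. -/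
open scoped Topology

/-- Improved Trotter–Kato error estimate using the smoothing effect of an analytic
semigroup: with intermediate spaces `Y ⊆ D(A) ⊆ Z ⊆ X`, the smoothing bound
`nY (T s f) ≤ M s^{ε-1} nZ f` for `s > 0`, and the consistency estimate
`‖(P_n A - A_n P_n) g‖ ≤ C nY g / n^p` on `Y`, one gets
`‖T_n(t) P_n f - P_n T(t) f‖ ≤ C' nZ f / n^p` for all `f ∈ Z`, with `C'` depending
only on `t`. -/
theorem trotter_kato_analytic_improvement
    {X : Type*} [NormedAddCommGroup X] [NormedSpace ℝ X] [CompleteSpace X]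
    {Xn : ℕ → Type*} [∀ n, NormedAddCommGroup (Xn n)] [∀ n, NormedSpace ℝ (Xn n)]
    [∀ n, CompleteSpace (Xn n)]
    (P : ∀ n, X →L[ℝ] Xn n) (J : ∀ n, Xn n →L[ℝ] X) (K : ℝ)
    (hK : 0 < K) (hPK : ∀ n, ‖P n‖ ≤ K) (hJK : ∀ n, ‖J n‖ ≤ K)
    (hPJ : ∀ n (x : Xn n), P n (J n x) = x)
    (hJP : ∀ f : X, Filter.Tendsto (fun n => J n (P n f)) Filter.atTop (𝓝 f))
    (T : ℝ → X →L[ℝ] X) (T' : ∀ n, ℝ → Xn n →L[ℝ] Xn n)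
    (hT0 : T 0 = ContinuousLinearMap.id ℝ X)
    (hTsg : ∀ s t : ℝ, 0 ≤ s → 0 ≤ t → T (s + t) = (T s).comp (T t))
    (hTcont : ∀ f : X, ContinuousOn (fun t => T t f) (Set.Ici 0))
    (hT'0 : ∀ n, T' n 0 = ContinuousLinearMap.id ℝ (Xn n))
    (hT'sg : ∀ n, ∀ s t : ℝ, 0 ≤ s → 0 ≤ t → T' n (s + t) = (T' n s).comp (T' n t))
    (hT'cont : ∀ n, ∀ x : Xn n, ContinuousOn (fun t => T' n t x) (Set.Ici 0))
    (M ω : ℝ) (hM : 1 ≤ M)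
    (hstab : ∀ n, ∀ t : ℝ, 0 ≤ t → ‖T' n t‖ ≤ M * Real.exp (ω * t))
    (DA : Set X) (A : X → X) (DA' : ∀ n, Set (Xn n)) (A' : ∀ n, Xn n → Xn n)
    (hgen : ∀ f ∈ DA, ∀ t : ℝ, 0 ≤ t → HasDerivAt (fun s => T s f) (T t (A f)) t)
    (hgen' : ∀ n, ∀ x ∈ DA' n, ∀ t : ℝ, 0 ≤ t →
      HasDerivAt (fun s => T' n s x) (T' n t (A' n x)) t)
    (Y Z : Set X) (nY nZ : X → ℝ)
    (hYnonneg : ∀ f ∈ Y, 0 ≤ nY f) (hZnonneg : ∀ f ∈ Z, 0 ≤ nZ f)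
    (hYDA : Y ⊆ DA) (hDAZ : DA ⊆ Z)
    (hYinv : ∀ t : ℝ, 0 ≤ t → ∀ f ∈ Y, T t f ∈ Y)
    (hYstab : ∀ t : ℝ, 0 ≤ t → ∀ f ∈ Y, nY (T t f) ≤ M * Real.exp (ω * t) * nY f)
    (hPY : ∀ n, ∀ f ∈ Y, P n f ∈ DA' n)
    (ε : ℝ) (hε : ε ∈ Set.Ioo (0 : ℝ) 1)
    (hsmooth : ∀ s : ℝ, 0 < s → ∀ f ∈ Z,
      T s f ∈ Y ∧ nY (T s f) ≤ M / Real.rpow s (1 - ε) * nZ f)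
    (C : ℝ) (hC : 0 < C) (p : ℕ)
    (hcons : ∀ n : ℕ, 1 ≤ n → ∀ g ∈ Y,
      ‖A' n (P n g) - P n (A g)‖ ≤ C * nY g / (n : ℝ) ^ p) :
    ∀ t : ℝ, 0 < t → ∃ C' : ℝ, 0 < C' ∧
      ∀ n : ℕ, 1 ≤ n → ∀ f ∈ Z,
        ‖T' n t (P n f) - P n (T t f)‖ ≤ C' * nZ f / (n : ℝ) ^ p := by
  intro t ht
  obtain ⟨hε0, hε1⟩ := hε
  have hM0 : (0:ℝ) < M := lt_of_lt_of_le one_pos hM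
  set L : ℝ := M * Real.exp (|ω| * t) with hLdef
  have hL0 : 0 < L := mul_pos hM0 (Real.exp_pos _)
  have hTop : ∀ (n : ℕ) (r : ℝ), 0 ≤ r → r ≤ t → ‖T' n r‖ ≤ L := by
    intro n r hr0 hrt
    refine (hstab n r hr0).trans ?_
    have h1 : ω * r ≤ |ω| * t := by
      calc ω * r ≤ |ω| * r := mul_le_mul_of_nonneg_right (le_abs_self ω) hr0
        _ ≤ |ω| * t := mul_le_mul_of_nonneg_left hrt (abs_nonneg ω)
    exact mul_le_mul_of_nonneg_left (Real.exp_le_exp.2 h1) hM0.le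
  -- commutation of the semigroup with the generator
  have hcomm : ∀ g ∈ DA, ∀ r : ℝ, 0 ≤ r → T r g ∈ DA → T r (A g) = A (T r g) := by
    intro g hg r hr hTg
    have h1 : HasDerivAt (fun s => T s g) (T r (A g)) r := hgen g hg r hr
    have h0 : HasDerivAt (fun u : ℝ => T u (T r g)) (A (T r g)) 0 := by
      have := hgen (T r g) hTg 0 le_rfl
      simpa [hT0] using this
    have h2 : HasDerivAt (fun s : ℝ => T (s - r) (T r g)) (A (T r g)) r := by
      have hsub : HasDerivAt (fun s : ℝ => s - r) 1 r := (hasDerivAt_id r).sub_const r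
      have := HasDerivAt.scomp_of_eq (x := r) h0 hsub (by ring)
      simpa [Function.comp_def] using this
    have heq : ∀ s ∈ Set.Ici r, T s g = T (s - r) (T r g) := by
      intro s hs
      have hs' : (0:ℝ) ≤ s - r := sub_nonneg.2 hs
      have hsg := hTsg (s - r) r hs' hr
      calc T s g = T (s - r + r) g := by rw [sub_add_cancel]
        _ = T (s - r) (T r g) := by rw [hsg]; rfl
    have hu : UniqueDiffWithinAt ℝ (Set.Ici r) r := uniqueDiffOn_Ici r r Set.self_mem_Ici
    have d1 := (h1.hasDerivWithinAt (s := Set.Ici r)).derivWithin hu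
    have d2 := ((h2.hasDerivWithinAt (s := Set.Ici r)).congr heq
      (by simp [hT0])).derivWithin hu
    rw [← d1, ← d2]
  refine ⟨L * C * M * t ^ ε / ε, by positivity, ?_⟩
  intro n hn f hf
  have hn0 : (0:ℝ) < (n:ℝ) := by exact_mod_cast hn
  have hnp : (0:ℝ) < (n:ℝ) ^ p := pow_pos hn0 p
  have hnz0 : 0 ≤ nZ f := hZnonneg f hf
  -- derivative of the orbit of f at positive times
  have hTfd : ∀ s0 : ℝ, 0 < s0 → HasDerivAt (fun s => T s f) (A (T s0 f)) s0 := by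
    intro s0 hs0
    have hh0 : 0 < s0 / 2 := by positivity
    have hg0Y : T (s0 / 2) f ∈ Y := (hsmooth (s0 / 2) hh0 f hf).1
    have hg0DA : T (s0 / 2) f ∈ DA := hYDA hg0Y
    have hs0f : T s0 f = T (s0 / 2) (T (s0 / 2) f) := by
      have hsg := hTsg (s0 / 2) (s0 / 2) hh0.le hh0.le
      conv_lhs => rw [← add_halves s0]
      rw [hsg]; rfl
    have hd1 : HasDerivAt (fun u : ℝ => T u (T (s0 / 2) f))
        (T (s0 / 2) (A (T (s0 / 2) f))) (s0 / 2) := hgen _ hg0DA _ hh0.le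
    have hd2 : HasDerivAt (fun s : ℝ => T (s - s0 / 2) (T (s0 / 2) f))
        (T (s0 / 2) (A (T (s0 / 2) f))) s0 := by
      have hsub : HasDerivAt (fun s : ℝ => s - s0 / 2) 1 s0 := (hasDerivAt_id s0).sub_const _
      have := HasDerivAt.scomp_of_eq (x := s0) hd1 hsub (by ring)
      simpa [Function.comp_def] using this
    have hev : (fun s => T s f) =ᶠ[𝓝 s0] (fun s : ℝ => T (s - s0 / 2) (T (s0 / 2) f)) := by
      filter_upwards [Ioi_mem_nhds (show s0 / 2 < s0 by linarith)] with s hs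
      have hs' : (0:ℝ) ≤ s - s0 / 2 := by
        have : s0 / 2 < s := hs
        linarith
      have hsg := hTsg (s - s0 / 2) (s0 / 2) hs' hh0.le
      calc T s f = T (s - s0 / 2 + s0 / 2) f := by rw [sub_add_cancel]
        _ = T (s - s0 / 2) (T (s0 / 2) f) := by rw [hsg]; rfl
    have hres := hd2.congr_of_eventuallyEq hev
    have hTs0DA : T (s0 / 2) (T (s0 / 2) f) ∈ DA := by
      rw [← hs0f]; exact hYDA (hsmooth s0 hs0 f hf).1
    have hc : T (s0 / 2) (A (T (s0 / 2) f)) = A (T (s0 / 2) (T (s0 / 2) f)) :=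
      hcomm _ hg0DA _ hh0.le hTs0DA
    rw [hs0f, ← hc]
    exact hres
  set φ : ℝ → Xn n := fun s => T' n (t - s) (P n (T s f)) with hφdef
  set D : ℝ → Xn n := fun s =>
    T' n (t - s) (P n (A (T s f)) - A' n (P n (T s f))) with hDdef
  -- derivative of φ on the open interval
  have hφd : ∀ s0 ∈ Set.Ioo (0:ℝ) t, HasDerivAt φ (D s0) s0 := by
    intro s0 hs0
    obtain ⟨h0, h1⟩ := hs0
    have hts0 : 0 < t - s0 := by linarith
    have hYs0 : T s0 f ∈ Y := (hsmooth s0 h0 f hf).1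
    have hx0 : P n (T s0 f) ∈ DA' n := hPY n _ hYs0
    have hvd : HasDerivAt (fun s => P n (T s f)) (P n (A (T s0 f))) s0 :=
      (P n).hasFDerivAt.comp_hasDerivAt s0 (hTfd s0 h0)
    have hvlo : (fun s => P n (T s f) - P n (T s0 f) - (s - s0) • P n (A (T s0 f)))
        =o[𝓝 s0] (fun s : ℝ => s - s0) := by
      simpa [Function.comp] using hasDerivAt_iff_isLittleO.1 hvd
    have hχ : HasDerivAt (fun s : ℝ => T' n (t - s) (P n (T s0 f)))
        (-(T' n (t - s0) (A' n (P n (T s0 f))))) s0 := by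
      have hbase : HasDerivAt (fun r => T' n r (P n (T s0 f)))
          (T' n (t - s0) (A' n (P n (T s0 f)))) (t - s0) := hgen' n _ hx0 _ hts0.le
      have hsub : HasDerivAt (fun s : ℝ => t - s) (-1) s0 := (hasDerivAt_id s0).const_sub t
      have := HasDerivAt.scomp_of_eq (x := s0) hbase hsub rfl
      simpa [Function.comp_def] using this
    have hχlo : (fun s : ℝ => T' n (t - s) (P n (T s0 f)) - T' n (t - s0) (P n (T s0 f))
        - (s - s0) • (-(T' n (t - s0) (A' n (P n (T s0 f))))))
        =o[𝓝 s0] (fun s : ℝ => s - s0) := by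
      simpa [Function.comp] using hasDerivAt_iff_isLittleO.1 hχ
    have hbigO : (fun s => (T' n (t - s))
          (P n (T s f) - P n (T s0 f) - (s - s0) • P n (A (T s0 f))))
        =O[𝓝 s0] (fun s => P n (T s f) - P n (T s0 f) - (s - s0) • P n (A (T s0 f))) := by
      refine Asymptotics.isBigO_iff.2 ⟨L, ?_⟩
      filter_upwards [Ioo_mem_nhds h0 h1] with s hs
      exact le_trans ((T' n (t - s)).le_opNorm _)
        (mul_le_mul_of_nonneg_right
          (hTop n (t - s) (by linarith [hs.2]) (by linarith [hs.1])) (norm_nonneg _))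
    have hE1 := hbigO.trans_isLittleO hvlo
    have hcontv' : Filter.Tendsto (fun s : ℝ => T' n (t - s) (P n (A (T s0 f)))
        - T' n (t - s0) (P n (A (T s0 f)))) (𝓝 s0) (𝓝 0) := by
      have hco : ContinuousAt (fun r : ℝ => T' n r (P n (A (T s0 f)))) (t - s0) :=
        (hT'cont n _).continuousAt (Ici_mem_nhds hts0)
      have h2 : ContinuousAt (fun s : ℝ => T' n (t - s) (P n (A (T s0 f)))) s0 :=
        hco.comp ((continuous_const.sub continuous_id).continuousAt)
      have := h2.sub_const (T' n (t - s0) (P n (A (T s0 f))))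
      simpa using this
    have hE2 : (fun s : ℝ => (s - s0) • (T' n (t - s) (P n (A (T s0 f)))
        - T' n (t - s0) (P n (A (T s0 f))))) =o[𝓝 s0] (fun s : ℝ => s - s0) := by
      rw [Asymptotics.isLittleO_iff]
      intro c hc
      have hev : ∀ᶠ s in 𝓝 s0, ‖T' n (t - s) (P n (A (T s0 f)))
          - T' n (t - s0) (P n (A (T s0 f)))‖ < c := by
        have := hcontv'.norm
        rw [norm_zero] at this
        exact this.eventually_lt_const hc
      filter_upwards [hev] with s hs
      rw [norm_smul]
      calc ‖s - s0‖ * ‖T' n (t - s) (P n (A (T s0 f)))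
            - T' n (t - s0) (P n (A (T s0 f)))‖
          ≤ ‖s - s0‖ * c := mul_le_mul_of_nonneg_left hs.le (norm_nonneg _)
        _ = c * ‖s - s0‖ := mul_comm _ _
    rw [hasDerivAt_iff_isLittleO]
    have hEq : (fun s => φ s - φ s0 - (s - s0) • D s0) =
        fun s => ((T' n (t - s))
            (P n (T s f) - P n (T s0 f) - (s - s0) • P n (A (T s0 f)))
          + ((s - s0) • (T' n (t - s) (P n (A (T s0 f)))
              - T' n (t - s0) (P n (A (T s0 f))))
            + (T' n (t - s) (P n (T s0 f)) - T' n (t - s0) (P n (T s0 f))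
              - (s - s0) • (-(T' n (t - s0) (A' n (P n (T s0 f)))))))) := by
      funext s
      simp only [hφdef, hDdef, map_sub, map_smul, smul_sub, smul_neg]
      abel
    rw [hEq]
    exact hE1.add (hE2.add hχlo)
  -- continuity of φ on [0, t]
  have hφcont : ContinuousOn φ (Set.Icc 0 t) := by
    intro s0 hs0
    have hvc : ContinuousWithinAt (fun s => P n (T s f)) (Set.Icc 0 t) s0 :=
      ((P n).continuous.comp_continuousOn
        ((hTcont f).mono (fun s hs => hs.1))) s0 hs0
    have hχt : Filter.Tendsto (fun s : ℝ => T' n (t - s) (P n (T s0 f)))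
        (𝓝[Set.Icc 0 t] s0) (𝓝 (T' n (t - s0) (P n (T s0 f)))) := by
      have houter : ContinuousOn (fun r : ℝ => T' n r (P n (T s0 f))) (Set.Ici 0) :=
        hT'cont n _
      have hmaps : Set.MapsTo (fun s : ℝ => t - s) (Set.Icc 0 t) (Set.Ici 0) := by
        intro s hs
        simp only [Set.mem_Ici]
        linarith [hs.2]
      exact (houter.comp ((continuous_const.sub continuous_id).continuousOn) hmaps) s0 hs0
    have h1 : Filter.Tendsto (fun s => T' n (t - s) (P n (T s f) - P n (T s0 f)))
        (𝓝[Set.Icc 0 t] s0) (𝓝 0) := by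
      have hb : ∀ᶠ s in 𝓝[Set.Icc 0 t] s0,
          ‖T' n (t - s) (P n (T s f) - P n (T s0 f))‖
            ≤ L * ‖P n (T s f) - P n (T s0 f)‖ := by
        filter_upwards [self_mem_nhdsWithin] with s hs
        exact le_trans ((T' n (t - s)).le_opNorm _)
          (mul_le_mul_of_nonneg_right
            (hTop n (t - s) (by linarith [hs.2]) (by linarith [hs.1])) (norm_nonneg _))
      have hgt : Filter.Tendsto (fun s => L * ‖P n (T s f) - P n (T s0 f)‖)
          (𝓝[Set.Icc 0 t] s0) (𝓝 (L * ‖P n (T s0 f) - P n (T s0 f)‖)) :=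
        (hvc.sub continuousWithinAt_const).norm.const_mul L
      rw [sub_self, norm_zero, mul_zero] at hgt
      exact squeeze_zero_norm' hb hgt
    have h2 := h1.add hχt
    rw [zero_add] at h2
    have h3 : Filter.Tendsto φ (𝓝[Set.Icc 0 t] s0)
        (𝓝 (T' n (t - s0) (P n (T s0 f)))) := by
      refine h2.congr (fun s => ?_)
      simp only [hφdef, map_sub]
      abel
    exact h3
  -- the integrable bound
  set c0 : ℝ := L * C * M * nZ f / (n:ℝ) ^ p with hc0
  have hDb : ∀ s ∈ Set.Ioo (0:ℝ) t, ‖D s‖ ≤ c0 * s ^ (ε - 1) := by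
    intro s hs
    have hsY : T s f ∈ Y := (hsmooth s hs.1 f hf).1
    have h1 : ‖D s‖ ≤ L * ‖A' n (P n (T s f)) - P n (A (T s f))‖ := by
      rw [hDdef]
      refine le_trans ((T' n (t - s)).le_opNorm _) ?_
      rw [norm_sub_rev]
      exact mul_le_mul_of_nonneg_right
        (hTop n (t - s) (by linarith [hs.2]) (by linarith [hs.1])) (norm_nonneg _)
    have h2 : ‖A' n (P n (T s f)) - P n (A (T s f))‖ ≤ C * nY (T s f) / (n:ℝ) ^ p :=
      hcons n hn _ hsY
    have h3 : nY (T s f) ≤ M * s ^ (ε - 1) * nZ f := by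
      have hsm := (hsmooth s hs.1 f hf).2
      have hrw : M / Real.rpow s (1 - ε) = M * s ^ (ε - 1) := by
        show M / s ^ (1 - ε) = M * s ^ (ε - 1)
        rw [div_eq_mul_inv, ← Real.rpow_neg hs.1.le, neg_sub]
      rw [hrw] at hsm
      exact hsm
    calc ‖D s‖ ≤ L * (C * nY (T s f) / (n:ℝ) ^ p) := h1.trans (by
          exact mul_le_mul_of_nonneg_left h2 hL0.le)
      _ ≤ L * (C * (M * s ^ (ε - 1) * nZ f) / (n:ℝ) ^ p) := by
          gcongr
      _ = c0 * s ^ (ε - 1) := by rw [hc0]; ring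
  have hεlt : (-1:ℝ) < ε - 1 := by linarith
  have hrpow_int : IntervalIntegrable (fun s : ℝ => c0 * s ^ (ε - 1))
      MeasureTheory.volume 0 t :=
    (intervalIntegral.intervalIntegrable_rpow' hεlt).const_mul c0
  have haebound : ∀ᵐ s ∂(MeasureTheory.volume.restrict (Set.Ioc (0:ℝ) t)),
      ‖deriv φ s‖ ≤ c0 * s ^ (ε - 1) := by
    rw [← MeasureTheory.Measure.restrict_congr_set MeasureTheory.Ioo_ae_eq_Ioc]
    refine (MeasureTheory.ae_restrict_iff' measurableSet_Ioo).2
      (Filter.Eventually.of_forall ?_)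
    intro s hs
    rw [(hφd s hs).deriv]
    exact hDb s hs
  have hderiv_int : IntervalIntegrable (deriv φ) MeasureTheory.volume 0 t := by
    rw [intervalIntegrable_iff, Set.uIoc_of_le ht.le]
    refine MeasureTheory.Integrable.mono hrpow_int.1 (aestronglyMeasurable_deriv φ _) ?_
    refine haebound.mono (fun s hs => hs.trans ?_)
    exact le_abs_self _
  have hFTC : ∫ s in (0:ℝ)..t, deriv φ s = φ t - φ 0 := by
    refine intervalIntegral.integral_eq_sub_of_hasDeriv_right_of_le ht.le hφcont
      (fun s hs => ?_) hderiv_int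
    rw [(hφd s hs).deriv]
    exact (hφd s hs).hasDerivWithinAt
  have hnorm : ‖∫ s in (0:ℝ)..t, deriv φ s‖ ≤ |∫ s in (0:ℝ)..t, c0 * s ^ (ε - 1)| := by
    exact intervalIntegral.norm_integral_le_abs_of_norm_le
      (by rw [Set.uIoc_of_le ht.le]; exact haebound) hrpow_int
  have hval : ∫ s in (0:ℝ)..t, c0 * s ^ (ε - 1) = c0 * (t ^ ε / ε) := by
    rw [intervalIntegral.integral_const_mul, integral_rpow (Or.inl hεlt)]
    have he : ε - 1 + 1 = ε := by ring
    rw [he, Real.zero_rpow (ne_of_gt hε0), sub_zero]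
  have e0 : φ 0 = T' n t (P n f) := by
    rw [hφdef]
    simp [hT0]
  have e1 : φ t = P n (T t f) := by
    rw [hφdef]
    simp [hT'0 n]
  have hkey : ‖T' n t (P n f) - P n (T t f)‖ ≤ c0 * (t ^ ε / ε) := by
    calc ‖T' n t (P n f) - P n (T t f)‖ = ‖φ t - φ 0‖ := by rw [e0, e1, norm_sub_rev]
      _ = ‖∫ s in (0:ℝ)..t, deriv φ s‖ := by rw [hFTC]
      _ ≤ |∫ s in (0:ℝ)..t, c0 * s ^ (ε - 1)| := hnorm
      _ = c0 * (t ^ ε / ε) := by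
          rw [hval, abs_of_nonneg]
          have htε : (0:ℝ) ≤ t ^ ε := (Real.rpow_pos_of_pos ht ε).le
          have hc00 : (0:ℝ) ≤ c0 := by rw [hc0]; positivity
          positivity
  refine hkey.trans_eq ?_
  rw [hc0]
  ring
end

section
/- Let u(t,z) = e^{−αω²t}(cos(ωz/h) − ω sin(ωz/h)) where ω satisfies tan(ω/h) = 2ω/(ω²−1). Then u solves the PDE ∂_t u = αh² ∂_zz u on (0,1) together with the dynamic boundary conditions ∂_t u(t,0) = αh ∂_z u(t,0) and ∂_t u(t,1) = −αh ∂_z u(t,1). -/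
open Real

private lemma hasDerivAt_inner (ω h y : ℝ) :
    HasDerivAt (fun y => ω * y / h) (ω / h) y := by
  simpa using ((hasDerivAt_id y).const_mul ω).div_const h

private lemma timeDeriv (c C t : ℝ) :
    HasDerivAt (fun s => Real.exp (c * s) * C) (c * (Real.exp (c * t) * C)) t := by
  have h1 : HasDerivAt (fun s => Real.exp (c * s)) (Real.exp (c * t) * c) t := by
    simpa [Function.comp_def] using (Real.hasDerivAt_exp (c * t)).comp t ((hasDerivAt_id t).const_mul c)
  simpa [mul_comm, mul_assoc, mul_left_comm] using h1.mul_const C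

private lemma spaceDeriv (E ω h y : ℝ) :
    HasDerivAt (fun y => E * (Real.cos (ω * y / h) - ω * Real.sin (ω * y / h)))
      (E * (ω / h) * (-(Real.sin (ω * y / h)) - ω * Real.cos (ω * y / h))) y := by
  have h1 := (Real.hasDerivAt_cos (ω * y / h)).comp y (hasDerivAt_inner ω h y)
  have h2 := (Real.hasDerivAt_sin (ω * y / h)).comp y (hasDerivAt_inner ω h y)
  have h3 := (h1.sub (h2.const_mul ω)).const_mul E
  exact h3.congr_deriv (by ring)

private lemma spaceDeriv2 (E ω h y : ℝ) :
    HasDerivAt (fun y => E * (ω / h) * (-(Real.sin (ω * y / h)) - ω * Real.cos (ω * y / h)))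
      (E * (ω / h) ^ 2 * (-(Real.cos (ω * y / h)) + ω * Real.sin (ω * y / h))) y := by
  have h1 := (Real.hasDerivAt_sin (ω * y / h)).comp y (hasDerivAt_inner ω h y)
  have h2 := (Real.hasDerivAt_cos (ω * y / h)).comp y (hasDerivAt_inner ω h y)
  have h3 := ((h1.neg.sub (h2.const_mul ω)).const_mul (E * (ω / h)))
  exact h3.congr_deriv (by ring)

private lemma key (ω h : ℝ) (hω2 : ω ^ 2 ≠ 1)
    (htan : Real.tan (ω / h) = 2 * ω / (ω ^ 2 - 1)) :
    ω * (ω ^ 2 - 1) * Real.sin (ω / h) = 2 * ω ^ 2 * Real.cos (ω / h) := by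
  have hden : ω ^ 2 - 1 ≠ 0 := sub_ne_zero.mpr hω2
  rcases eq_or_ne (Real.cos (ω / h)) 0 with hc | hc
  · have h0 : Real.tan (ω / h) = 0 := by
      rw [Real.tan_eq_sin_div_cos, hc, div_zero]
    rw [h0] at htan
    have hω : ω = 0 := by
      field_simp at htan
      linear_combination (-1/2 : ℝ) * htan
    rw [hω] at hc
    simp at hc
  · rw [Real.tan_eq_sin_div_cos] at htan
    field_simp at htan
    linear_combination ω * htan

/-- The separated function `u(t,z) = e^{-αω²t}(cos(ωz/h) - ω sin(ωz/h))`, with `ω`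
satisfying `tan(ω/h) = 2ω/(ω² - 1)`, solves `∂ₜ u = αh² ∂_zz u` on `(0,1)` together
with the dynamic boundary conditions `∂ₜ u(t,0) = αh ∂_z u(t,0)` and
`∂ₜ u(t,1) = -(αh) ∂_z u(t,1)`. -/
theorem voter_separated_solution
    (α h ω : ℝ) (hα : 0 < α) (hh : 0 < h) (hω2 : ω ^ 2 ≠ 1)
    (htan : Real.tan (ω / h) = 2 * ω / (ω ^ 2 - 1)) :
    let u : ℝ → ℝ → ℝ := fun t z =>
      Real.exp (-α * ω ^ 2 * t) * (Real.cos (ω * z / h) - ω * Real.sin (ω * z / h))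
    (∀ t : ℝ, ∀ z ∈ Set.Ioo (0 : ℝ) 1,
        deriv (fun s => u s z) t = α * h ^ 2 * deriv (deriv fun y => u t y) z) ∧
      (∀ t : ℝ, deriv (fun s => u s 0) t = α * h * deriv (fun y => u t y) 0) ∧
      (∀ t : ℝ, deriv (fun s => u s 1) t = -(α * h) * deriv (fun y => u t y) 1) := by
  intro u
  have hh' : h ≠ 0 := ne_of_gt hh
  have htime : ∀ t z : ℝ, deriv (fun s => u s z) t =
      (-α * ω ^ 2) * (Real.exp (-α * ω ^ 2 * t) *
        (Real.cos (ω * z / h) - ω * Real.sin (ω * z / h))) := by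
    intro t z
    exact (timeDeriv (-α * ω ^ 2) _ t).deriv
  have hspace : ∀ t : ℝ, deriv (fun y => u t y) = fun z =>
      Real.exp (-α * ω ^ 2 * t) * (ω / h) *
        (-(Real.sin (ω * z / h)) - ω * Real.cos (ω * z / h)) := by
    intro t
    funext z
    exact (spaceDeriv (Real.exp (-α * ω ^ 2 * t)) ω h z).deriv
  refine ⟨?_, ?_, ?_⟩
  · intro t z _
    rw [htime, hspace t, (spaceDeriv2 (Real.exp (-α * ω ^ 2 * t)) ω h z).deriv]
    field_simp
    ring
  · intro t
    rw [htime, hspace t]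
    simp only [mul_zero, zero_div, Real.cos_zero, Real.sin_zero]
    field_simp
    ring
  · intro t
    have hkey := key ω h hω2 htan
    rw [htime, hspace t]
    simp only [mul_one]
    field_simp
    linear_combination hkey
end
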